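/- The value function of a rational LP in the right-hand-side-free parameter form is piecewise linear: v(y) = inf_x { cᵀ x : A x + B y ≥ b } (with A, B, b, c rational) is a function of y that is, on each cell of a finite partition of ℝ^{n_y} into rational generalized polyhedra, either a rational affine-linear function of y, identically +∞, or identically −∞. -/

import Mathlib

/-- A rational generalized polyhedron in ℝⁿ. -/
def IsRatGenPolyhedron {n : ℕ} (P : Set (Fin n → ℝ)) : Prop :=
  ∃ (m m' : ℕ) (A : Matrix (Fin m) (Fin n) ℚ) (B : Matrix (Fin m') (Fin n) ℚ)
    (a : Fin m → ℚ) (b : Fin m' → ℚ),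
    P = {x | (fun i => (a i : ℝ)) ≤ (A.map ((↑·) : ℚ → ℝ)).mulVec x ∧
             ∀ i, (b i : ℝ) < (B.map ((↑·) : ℚ → ℝ)).mulVec x i}


lemma list_exists_max (l : List ℝ) (h : l ≠ []) : ∃ M ∈ l, ∀ v ∈ l, v ≤ M := by
  induction l with
  | nil => simp at h
  | cons a t ih =>
    rcases eq_or_ne t [] with rfl | ht
    · exact ⟨a, by simp⟩
    · obtain ⟨M, hM, hle⟩ := ih ht
      refine ⟨max a M, ?_, ?_⟩
      · rcases le_total a M with h1 | h1
        · simp [max_eq_right h1, hM]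
        · simp [max_eq_left h1]
      · intro v hv
        rcases List.mem_cons.1 hv with rfl | hv
        · exact le_max_left _ _
        · exact (hle v hv).trans (le_max_right _ _)

lemma list_exists_lb (l : List ℝ) : ∃ M : ℝ, ∀ v ∈ l, M ≤ v := by
  induction l with
  | nil => exact ⟨0, by simp⟩
  | cons a t ih =>
    obtain ⟨M, hM⟩ := ih
    exact ⟨min M a, fun v hv => by
      rcases List.mem_cons.1 hv with rfl | hv
      · exact min_le_right _ _
      · exact le_trans (min_le_left _ _) (hM v hv)⟩

/-- Fourier–Motzkin single-variable elimination, abstract form. -/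
lemma fm_one (L : List (ℚ × ℝ)) :
    (∃ s : ℝ, ∀ p ∈ L, 0 ≤ (p.1 : ℝ) * s + p.2) ↔
    ((∀ p ∈ L, p.1 = 0 → 0 ≤ p.2) ∧
     ∀ p ∈ L, ∀ p' ∈ L, 0 < p.1 → p'.1 < 0 →
       0 ≤ (-p'.1 : ℝ) * p.2 + (p.1 : ℝ) * p'.2) := by
  constructor
  · rintro ⟨s, hs⟩
    constructor
    · intro p hp h0
      have := hs p hp
      rw [h0] at this; push_cast at this; linarith
    · intro p hp p' hp' h1 h2
      have e1 := hs p hp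
      have e2 := hs p' hp'
      have h1' : (0:ℝ) < (p.1:ℝ) := by exact_mod_cast h1
      have h2' : (p'.1:ℝ) < 0 := by exact_mod_cast h2
      nlinarith
  · rintro ⟨hz, hpair⟩
    set lows := L.filterMap (fun p => if 0 < p.1 then some (-p.2 / (p.1 : ℝ)) else none) with hlows
    have memlow : ∀ v, v ∈ lows ↔ ∃ p ∈ L, 0 < p.1 ∧ v = -p.2 / (p.1:ℝ) := by
      intro v
      simp only [hlows, List.mem_filterMap]
      constructor
      · rintro ⟨p, hp, hv⟩
        by_cases h : 0 < p.1
        · simp [h] at hv; exact ⟨p, hp, h, hv.symm⟩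
        · simp [h] at hv
      · rintro ⟨p, hp, h, rfl⟩
        exact ⟨p, hp, by simp [h]⟩
    have keypos : ∀ (p : ℚ × ℝ) (s : ℝ), 0 < p.1 → ((0 ≤ (p.1:ℝ) * s + p.2) ↔ -p.2 / (p.1:ℝ) ≤ s) := by
      intro p s h
      have h' : (0:ℝ) < (p.1:ℝ) := by exact_mod_cast h
      rw [div_le_iff₀ h']; constructor <;> intro <;> nlinarith
    have keyneg : ∀ (p : ℚ × ℝ) (s : ℝ), p.1 < 0 → ((0 ≤ (p.1:ℝ) * s + p.2) ↔ s ≤ -p.2 / (p.1:ℝ)) := by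
      intro p s h
      have h' : (p.1:ℝ) < 0 := by exact_mod_cast h
      rw [le_div_iff_of_neg h']; constructor <;> intro <;> nlinarith
    rcases eq_or_ne lows [] with hemp | hne
    · have hub := list_exists_lb (L.filterMap
        (fun p => if p.1 < 0 then some (-p.2 / (p.1 : ℝ)) else none))
      obtain ⟨M, hM⟩ := hub
      refine ⟨M, fun p hp => ?_⟩
      rcases lt_trichotomy p.1 0 with h | h | h
      · rw [keyneg p M h]
        exact hM _ (List.mem_filterMap.2 ⟨p, hp, by simp [h]⟩)
      · have := hz p hp h; rw [h]; push_cast; linarith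
      · exfalso
        have : -p.2 / (p.1:ℝ) ∈ lows := (memlow _).2 ⟨p, hp, h, rfl⟩
        rw [hemp] at this; simp at this
    · obtain ⟨M, hMmem, hMmax⟩ := list_exists_max lows hne
      obtain ⟨p₀, hp₀, h₀, rfl⟩ := (memlow M).1 hMmem
      refine ⟨-p₀.2 / (p₀.1:ℝ), fun p hp => ?_⟩
      rcases lt_trichotomy p.1 0 with h | h | h
      · rw [keyneg p _ h]
        have hc := hpair p₀ hp₀ p hp h₀ h
        have h1' : (0:ℝ) < (p₀.1:ℝ) := by exact_mod_cast h₀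
        have h2' : (p.1:ℝ) < 0 := by exact_mod_cast h
        have e1 : (-p₀.2 / (p₀.1:ℝ)) * (p₀.1:ℝ) = -p₀.2 := div_mul_cancel₀ _ (ne_of_gt h1')
        have e2 : (-p.2 / (p.1:ℝ)) * (p.1:ℝ) = -p.2 := div_mul_cancel₀ _ (ne_of_lt h2')
        nlinarith [mul_pos h1' (neg_pos.2 h2'), e1, e2, hc]
      · have := hz p hp h; rw [h]; push_cast; linarith
      · rw [keypos p _ h]
        exact hMmax _ ((memlow _).2 ⟨p, hp, h, rfl⟩)


abbrev LinCon (nx nz : ℕ) := (Fin nx → ℚ) × (Fin nz → ℚ) × ℚ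

noncomputable def evalCon {nx nz : ℕ} (c : LinCon nx nz) (x : Fin nx → ℝ) (z : Fin nz → ℝ) : ℝ :=
  (∑ j, (c.1 j : ℝ) * x j) + (∑ j, (c.2.1 j : ℝ) * z j) - (c.2.2 : ℝ)

def SatL {nx nz : ℕ} (L : List (LinCon nx nz)) (x : Fin nx → ℝ) (z : Fin nz → ℝ) : Prop :=
  ∀ c ∈ L, 0 ≤ evalCon c x z

def Sat0 {nz : ℕ} (L : List ((Fin nz → ℚ) × ℚ)) (z : Fin nz → ℝ) : Prop :=
  ∀ c ∈ L, 0 ≤ (∑ j, (c.1 j : ℝ) * z j) - (c.2 : ℝ)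

def combineCon {nx nz : ℕ} (c c' : LinCon (nx+1) nz) : LinCon nx nz :=
  ((-c'.1 (Fin.last nx)) • (Fin.init c.1) + (c.1 (Fin.last nx)) • (Fin.init c'.1),
   (-c'.1 (Fin.last nx)) • c.2.1 + (c.1 (Fin.last nx)) • c'.2.1,
   (-c'.1 (Fin.last nx)) * c.2.2 + (c.1 (Fin.last nx)) * c'.2.2)

def elimLast {nx nz : ℕ} (L : List (LinCon (nx+1) nz)) : List (LinCon nx nz) :=
  (L.filterMap fun c => if c.1 (Fin.last nx) = 0 then some (Fin.init c.1, c.2) else none)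
  ++ (L.flatMap fun c => L.filterMap fun c' =>
       if 0 < c.1 (Fin.last nx) ∧ c'.1 (Fin.last nx) < 0 then some (combineCon c c') else none)

lemma eval_split {nx nz : ℕ} (c : LinCon (nx+1) nz) (x' : Fin nx → ℝ) (s : ℝ) (z : Fin nz → ℝ) :
    evalCon c (Fin.snoc x' s) z
      = (c.1 (Fin.last nx) : ℝ) * s + evalCon (Fin.init c.1, c.2) x' z := by
  simp only [evalCon, Fin.init]
  rw [Fin.sum_univ_castSucc]
  simp only [Fin.snoc_castSucc, Fin.snoc_last]
  ring

lemma eval_combine {nx nz : ℕ} (c c' : LinCon (nx+1) nz) (x' : Fin nx → ℝ) (z : Fin nz → ℝ) :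
    evalCon (combineCon c c') x' z
      = (-c'.1 (Fin.last nx) : ℝ) * evalCon (Fin.init c.1, c.2) x' z
        + (c.1 (Fin.last nx) : ℝ) * evalCon (Fin.init c'.1, c'.2) x' z := by
  simp only [evalCon, combineCon, Pi.add_apply, Pi.smul_apply, smul_eq_mul]
  push_cast
  simp only [add_mul, Finset.sum_add_distrib, mul_assoc, ← Finset.mul_sum]
  ring

lemma fm_step {nx nz : ℕ} (L : List (LinCon (nx+1) nz)) (x' : Fin nx → ℝ) (z : Fin nz → ℝ) :
    (∃ s, SatL L (Fin.snoc x' s) z) ↔ SatL (elimLast L) x' z := by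
  have h1 : (∃ s, SatL L (Fin.snoc x' s) z) ↔
      (∃ s : ℝ, ∀ p ∈ (L.map (fun c => (c.1 (Fin.last nx), evalCon (Fin.init c.1, c.2) x' z)) : List (ℚ × ℝ)),
        0 ≤ (p.1 : ℝ) * s + p.2) := by
    apply exists_congr; intro s
    constructor
    · rintro hs p hp
      obtain ⟨c, hc, rfl⟩ := List.mem_map.1 hp
      simpa [eval_split] using hs c hc
    · intro hs c hc
      rw [eval_split]
      exact hs _ (List.mem_map.2 ⟨c, hc, rfl⟩)
  rw [h1, fm_one]
  constructor
  · rintro ⟨hz, hpair⟩ c'' hc''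
    rcases List.mem_append.1 hc'' with hmem | hmem
    · obtain ⟨c, hc, hcc⟩ := List.mem_filterMap.1 hmem
      by_cases h : c.1 (Fin.last nx) = 0
      · simp only [h, if_pos] at hcc
        obtain rfl := Option.some_injective _ hcc
        exact hz _ (List.mem_map.2 ⟨c, hc, rfl⟩) h
      · simp [h] at hcc
    · obtain ⟨c, hc, hmem2⟩ := List.mem_flatMap.1 hmem
      obtain ⟨c', hc', hcc⟩ := List.mem_filterMap.1 hmem2
      by_cases h : 0 < c.1 (Fin.last nx) ∧ c'.1 (Fin.last nx) < 0
      · simp only [h, if_pos] at hcc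
        obtain rfl := Option.some_injective _ hcc
        rw [eval_combine]
        exact hpair _ (List.mem_map.2 ⟨c, hc, rfl⟩) _ (List.mem_map.2 ⟨c', hc', rfl⟩) h.1 h.2
      · simp [h] at hcc
  · intro hsat
    constructor
    · rintro p hp h0
      obtain ⟨c, hc, rfl⟩ := List.mem_map.1 hp
      simp only at h0
      exact hsat _ (List.mem_append.2 (Or.inl (List.mem_filterMap.2 ⟨c, hc, by simp [h0]⟩)))
    · rintro p hp p' hp' h1 h2
      obtain ⟨c, hc, rfl⟩ := List.mem_map.1 hp
      obtain ⟨c', hc', rfl⟩ := List.mem_map.1 hp'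
      simp only at h1 h2
      have := hsat (combineCon c c') (List.mem_append.2 (Or.inr (List.mem_flatMap.2
        ⟨c, hc, List.mem_filterMap.2 ⟨c', hc', by simp [h1, h2]⟩⟩)))
      rwa [eval_combine] at this

theorem fm_main : ∀ (nx : ℕ) {nz : ℕ} (L : List (LinCon nx nz)),
    ∃ L0 : List ((Fin nz → ℚ) × ℚ), ∀ z, (∃ x, SatL L x z) ↔ Sat0 L0 z := by
  intro nx
  induction nx with
  | zero =>
    intro nz L
    refine ⟨L.map (fun c => c.2), fun z => ?_⟩
    constructor
    · rintro ⟨x, hx⟩ c hc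
      obtain ⟨c', hc', rfl⟩ := List.mem_map.1 hc
      have := hx c' hc'
      simpa [evalCon] using this
    · intro h
      refine ⟨fun i => i.elim0, fun c hc => ?_⟩
      have := h c.2 (List.mem_map.2 ⟨c, hc, rfl⟩)
      simpa [evalCon] using this
  | succ nx ih =>
    intro nz L
    obtain ⟨L0, hL0⟩ := ih (elimLast L)
    refine ⟨L0, fun z => ?_⟩
    rw [← hL0]
    constructor
    · rintro ⟨x, hx⟩
      refine ⟨Fin.init x, (fm_step L (Fin.init x) z).1 ⟨x (Fin.last nx), ?_⟩⟩
      rwa [Fin.snoc_init_self]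
    · rintro ⟨x', hx'⟩
      obtain ⟨s, hs⟩ := (fm_step L x' z).2 hx'
      exact ⟨_, hs⟩

lemma forall_fin_add {m1 m2 : ℕ} (R : Fin (m1+m2) → Prop) :
    (∀ i, R i) ↔ (∀ i, R (Fin.castAdd m2 i)) ∧ (∀ i, R (Fin.natAdd m1 i)) :=
  ⟨fun h => ⟨fun i => h _, fun i => h _⟩, fun h i => Fin.addCases h.1 h.2 i⟩

lemma isRatGenPolyhedron_univ {n : ℕ} : IsRatGenPolyhedron (Set.univ : Set (Fin n → ℝ)) := by
  refine ⟨0, 0, 0, 0, 0, 0, ?_⟩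
  ext x
  simp [Pi.le_def]

lemma IsRatGenPolyhedron.inter {n : ℕ} {P Q : Set (Fin n → ℝ)}
    (hP : IsRatGenPolyhedron P) (hQ : IsRatGenPolyhedron Q) : IsRatGenPolyhedron (P ∩ Q) := by
  obtain ⟨m1, m1', A1, B1, a1, b1, rfl⟩ := hP
  obtain ⟨m2, m2', A2, B2, a2, b2, rfl⟩ := hQ
  refine ⟨m1 + m2, m1' + m2',
    Matrix.of (fun i j => Fin.addCases (fun i1 => A1 i1 j) (fun i2 => A2 i2 j) i),
    Matrix.of (fun i j => Fin.addCases (fun i1 => B1 i1 j) (fun i2 => B2 i2 j) i),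
    fun i => Fin.addCases (fun i1 => a1 i1) (fun i2 => a2 i2) i,
    fun i => Fin.addCases (fun i1 => b1 i1) (fun i2 => b2 i2) i, ?_⟩
  ext x
  simp only [Set.mem_inter_iff, Set.mem_setOf_eq, Pi.le_def, Matrix.mulVec, dotProduct,
    Matrix.map_apply, Matrix.of_apply]
  rw [forall_fin_add (m1 := m1) (m2 := m2), forall_fin_add (m1 := m1') (m2 := m2')]
  simp only [Fin.addCases_left, Fin.addCases_right]
  tauto

lemma poly_ge {n : ℕ} (q : Fin n → ℚ) (r : ℚ) :
    IsRatGenPolyhedron {y : Fin n → ℝ | (r : ℝ) ≤ ∑ j, (q j : ℝ) * y j} := by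
  refine ⟨1, 0, Matrix.of (fun _ j => q j), 0, fun _ => r, 0, ?_⟩
  ext y
  simp [Pi.le_def, Matrix.mulVec, dotProduct, Fin.forall_fin_one]

lemma poly_lt {n : ℕ} (q : Fin n → ℚ) (r : ℚ) :
    IsRatGenPolyhedron {y : Fin n → ℝ | ∑ j, (q j : ℝ) * y j < (r : ℝ)} := by
  refine ⟨0, 1, 0, Matrix.of (fun _ j => -q j), 0, fun _ => -r, ?_⟩
  have key : ∀ y : Fin n → ℝ, (∑ j, ((-q j : ℚ) : ℝ) * y j) = -∑ j, (q j : ℝ) * y j := by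
    intro y
    rw [← Finset.sum_neg_distrib]
    refine Finset.sum_congr rfl fun j _ => ?_
    push_cast; ring
  ext y
  simp only [Set.mem_setOf_eq, Pi.le_def, Matrix.mulVec, dotProduct, Matrix.map_apply,
    Matrix.of_apply, Fin.forall_fin_one]
  rw [key y]
  push_cast
  constructor
  · intro h
    exact ⟨fun i => i.elim0, by linarith⟩
  · rintro ⟨-, h⟩
    linarith

lemma isRatGenPolyhedron_iInter {ι : Type*} [Fintype ι] {n : ℕ} (f : ι → Set (Fin n → ℝ))
    (hf : ∀ i, IsRatGenPolyhedron (f i)) : IsRatGenPolyhedron (⋂ i, f i) := by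
  classical
  suffices h : ∀ s : Finset ι, IsRatGenPolyhedron (⋂ i ∈ s, f i) by
    simpa using h Finset.univ
  intro s
  induction s using Finset.induction_on with
  | empty => simpa using isRatGenPolyhedron_univ
  | insert a s ha ih =>
    rw [Finset.set_biInter_insert]
    exact (hf _).inter ih

lemma inf_eq_sInf_epigraph {X : Type*} (F : Set X) (f : X → ℝ) :
    (⨅ x : F, ((f x : ℝ) : EReal)) = sInf ((fun t : ℝ => (t : EReal)) '' {t | ∃ x ∈ F, f x ≤ t}) := by
  apply le_antisymm
  · apply le_sInf
    rintro b ⟨t, ⟨x, hxF, hfx⟩, rfl⟩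
    exact le_trans (iInf_le _ ⟨x, hxF⟩) (EReal.coe_le_coe_iff.mpr hfx)
  · apply le_iInf
    rintro ⟨x, hx⟩
    exact sInf_le ⟨f x, ⟨x, hx, le_refl _⟩, rfl⟩

noncomputable def Qsum {ny : ℕ} (q : Fin ny → ℚ) (y : Fin ny → ℝ) : ℝ := ∑ j, (q j : ℝ) * y j

noncomputable def C1set {ny : ℕ} (q : Fin ny → ℚ) (r : ℚ) (b : Bool) : Set (Fin ny → ℝ) :=
  if b then {y | (r : ℝ) ≤ Qsum q y} else {y | Qsum q y < (r : ℝ)}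

lemma C1set_poly {ny : ℕ} (q : Fin ny → ℚ) (r : ℚ) (b : Bool) :
    IsRatGenPolyhedron (C1set q r b) := by
  cases b
  · simpa [C1set, Qsum] using poly_lt q r
  · simpa [C1set, Qsum] using poly_ge q r

lemma mem_C1set {ny : ℕ} {q : Fin ny → ℚ} {r : ℚ} {b : Bool} {y : Fin ny → ℝ} :
    y ∈ C1set q r b ↔ (if b then (r : ℝ) ≤ Qsum q y else Qsum q y < (r : ℝ)) := by
  cases b <;> simp [C1set]

lemma C1set_sign_eq {ny : ℕ} {q : Fin ny → ℚ} {r : ℚ} {b b' : Bool} {y : Fin ny → ℝ}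
    (h : y ∈ C1set q r b) (h' : y ∈ C1set q r b') : b = b' := by
  rw [mem_C1set] at h h'
  cases b <;> cases b' <;> simp_all <;> linarith

def cmpQ {ny N : ℕ} (α : Fin N → ℚ) (q : Fin N → Fin ny → ℚ) (i j : Fin N) : Fin ny → ℚ :=
  fun k => α i * q j k - α j * q i k

def cmpR {N : ℕ} (α : Fin N → ℚ) (r : Fin N → ℚ) (i j : Fin N) : ℚ :=
  α i * r j - α j * r i

lemma cmp_eval {ny N : ℕ} (α : Fin N → ℚ) (q : Fin N → Fin ny → ℚ) (r : Fin N → ℚ)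
    (i j : Fin N) (y : Fin ny → ℝ) :
    Qsum (cmpQ α q i j) y - (cmpR α r i j : ℝ)
      = (α i : ℝ) * (Qsum (q j) y - (r j : ℝ)) - (α j : ℝ) * (Qsum (q i) y - (r i : ℝ)) := by
  simp only [Qsum, cmpQ, cmpR]
  push_cast
  simp only [sub_mul, Finset.sum_sub_distrib, mul_assoc, ← Finset.mul_sum]
  ring

noncomputable def CellSet {ny N : ℕ} (α : Fin N → ℚ) (q : Fin N → Fin ny → ℚ) (r : Fin N → ℚ)
    (σ : (Fin N → Bool) × (Fin N → Fin N → Bool)) : Set (Fin ny → ℝ) :=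
  (⋂ i, C1set (q i) (r i) (σ.1 i)) ∩
  (⋂ ij : Fin N × Fin N, C1set (cmpQ α q ij.1 ij.2) (cmpR α r ij.1 ij.2) (σ.2 ij.1 ij.2))

lemma mem_CellSet {ny N : ℕ} {α : Fin N → ℚ} {q : Fin N → Fin ny → ℚ} {r : Fin N → ℚ}
    {σ : (Fin N → Bool) × (Fin N → Fin N → Bool)} {y : Fin ny → ℝ} :
    y ∈ CellSet α q r σ ↔
      ((∀ i, y ∈ C1set (q i) (r i) (σ.1 i)) ∧
       ∀ i j, y ∈ C1set (cmpQ α q i j) (cmpR α r i j) (σ.2 i j)) := by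
  simp [CellSet, Set.mem_iInter, Prod.forall]

lemma CellSet_poly {ny N : ℕ} (α : Fin N → ℚ) (q : Fin N → Fin ny → ℚ) (r : Fin N → ℚ)
    (σ : (Fin N → Bool) × (Fin N → Fin N → Bool)) :
    IsRatGenPolyhedron (CellSet α q r σ) := by
  refine IsRatGenPolyhedron.inter ?_ ?_
  · exact isRatGenPolyhedron_iInter _ fun i => C1set_poly _ _ _
  · exact isRatGenPolyhedron_iInter _ fun ij => C1set_poly _ _ _

lemma CellSet_disj {ny N : ℕ} {α : Fin N → ℚ} {q : Fin N → Fin ny → ℚ} {r : Fin N → ℚ}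
    {σ σ' : (Fin N → Bool) × (Fin N → Fin N → Bool)} {y : Fin ny → ℝ}
    (h : y ∈ CellSet α q r σ) (h' : y ∈ CellSet α q r σ') : σ = σ' := by
  obtain ⟨h1, h2⟩ := mem_CellSet.1 h
  obtain ⟨h1', h2'⟩ := mem_CellSet.1 h'
  refine Prod.ext_iff.2 ⟨funext fun i => ?_, funext fun i => funext fun j => ?_⟩
  · exact C1set_sign_eq (h1 i) (h1' i)
  · exact C1set_sign_eq (h2 i j) (h2' i j)

lemma CellSet_cover {ny N : ℕ} (α : Fin N → ℚ) (q : Fin N → Fin ny → ℚ) (r : Fin N → ℚ)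
    (y : Fin ny → ℝ) : ∃ σ, y ∈ CellSet α q r σ := by
  classical
  refine ⟨(fun i => decide ((r i : ℝ) ≤ Qsum (q i) y),
          fun i j => decide ((cmpR α r i j : ℝ) ≤ Qsum (cmpQ α q i j) y)), ?_⟩
  rw [mem_CellSet]
  constructor
  · intro i
    rw [mem_C1set]
    by_cases h : (r i : ℝ) ≤ Qsum (q i) y
    · simp [h]
    · simp [h, lt_of_not_ge h]
  · intro i j
    rw [mem_C1set]
    by_cases h : (cmpR α r i j : ℝ) ≤ Qsum (cmpQ α q i j) y
    · simp [h]
    · simp [h, lt_of_not_ge h]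

lemma sInf_image_coe_eq {S : Set ℝ} {t₀ : ℝ} (hmem : t₀ ∈ S) (hlb : ∀ t ∈ S, t₀ ≤ t) :
    sInf ((fun t : ℝ => (t : EReal)) '' S) = (t₀ : EReal) := by
  refine le_antisymm (sInf_le ?_) (le_sInf ?_)
  · exact ⟨t₀, hmem, rfl⟩
  · rintro b ⟨t, ht, rfl⟩
    exact EReal.coe_le_coe_iff.2 (hlb t ht)

lemma sInf_image_coe_eq_bot {S : Set ℝ} (h : ∀ M : ℝ, ∃ t ∈ S, t ≤ M) :
    sInf ((fun t : ℝ => (t : EReal)) '' S) = ⊥ := by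
  rw [sInf_eq_bot]
  intro b hb
  induction b using EReal.rec with
  | bot => exact absurd hb (lt_irrefl _)
  | coe M =>
    obtain ⟨t, ht, hle⟩ := h (M - 1)
    refine ⟨(t : EReal), ⟨t, ht, rfl⟩, ?_⟩
    exact_mod_cast (by linarith : t < M)
  | top =>
    obtain ⟨t, ht, -⟩ := h 0
    exact ⟨(t : EReal), ⟨t, ht, rfl⟩, EReal.coe_lt_top t⟩

theorem master {ny N : ℕ} (α : Fin N → ℚ) (q : Fin N → Fin ny → ℚ) (r : Fin N → ℚ)
    (v : (Fin ny → ℝ) → EReal)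
    (hv : ∀ y, v y = sInf ((fun t : ℝ => (t : EReal)) ''
      {t : ℝ | ∀ i, 0 ≤ (α i : ℝ) * t + (Qsum (q i) y - (r i : ℝ))})) :
    ∃ (k : ℕ) (P : Fin k → Set (Fin ny → ℝ)),
      (∀ l, IsRatGenPolyhedron (P l)) ∧
      Pairwise (Function.onFun Disjoint P) ∧
      (⋃ l, P l) = Set.univ ∧
      ∀ l, (∃ (c' : Fin ny → ℚ) (d : ℚ), ∀ y ∈ P l,
              v y = ((∑ j, (c' j : ℝ) * y j + (d : ℝ) : ℝ) : EReal)) ∨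
           (∀ y ∈ P l, v y = ⊤) ∨ (∀ y ∈ P l, v y = ⊥) := by
  classical
  set I := ((Fin N → Bool) × (Fin N → Fin N → Bool)) with hI
  set e := Fintype.equivFin I with he
  refine ⟨Fintype.card I, fun l => CellSet α q r (e.symm l), fun l => CellSet_poly α q r _,
    ?_, ?_, ?_⟩
  · intro l l' hne
    rw [Function.onFun, Set.disjoint_left]
    intro y hy hy'
    exact hne (e.symm.injective.eq_iff.1 (CellSet_disj hy hy'))
  · ext y
    simp only [Set.mem_iUnion, Set.mem_univ, iff_true]
    obtain ⟨σ, hσ⟩ := CellSet_cover α q r y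
    exact ⟨e σ, by simpa using hσ⟩
  · intro l
    set σ := e.symm l with hσdef
    by_cases hA : ∃ i, α i = 0 ∧ σ.1 i = false
    · right; left
      intro y hy
      rw [hv y]
      obtain ⟨i, hαi, hsi⟩ := hA
      have hmem := (mem_CellSet.1 hy).1 i
      rw [mem_C1set, hsi] at hmem
      simp only [if_neg Bool.false_ne_true, Bool.false_eq_true, if_false] at hmem
      have hempty : {t : ℝ | ∀ i, 0 ≤ (α i : ℝ) * t + (Qsum (q i) y - (r i : ℝ))} = ∅ := by
        ext t
        simp only [Set.mem_setOf_eq, Set.mem_empty_iff_false, iff_false, not_forall]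
        refine ⟨i, ?_⟩
        rw [hαi]
        push_cast
        simp only [zero_mul, zero_add]
        linarith
      rw [hempty]
      simp
    · push_neg at hA
      have hzero : ∀ y ∈ CellSet α q r σ, ∀ i, α i = 0 → (0:ℝ) ≤ Qsum (q i) y - (r i : ℝ) := by
        intro y hy i h
        have hs : σ.1 i = true := by
          have := hA i h
          simpa using this
        have hmem := (mem_CellSet.1 hy).1 i
        rw [mem_C1set, hs] at hmem
        simp only [if_true] at hmem
        linarith
      by_cases hB : ∀ i, α i ≤ 0
      · right; right
        intro y hy
        rw [hv y]
        apply sInf_image_coe_eq_bot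
        intro M
        set S : ℝ := ∑ i, (if α i < 0 then max 0 (M - (-(Qsum (q i) y - (r i:ℝ)) / (α i : ℝ))) else 0) with hS
        have hSnn : 0 ≤ S := by
          apply Finset.sum_nonneg
          intro i _
          by_cases h : α i < 0 <;> simp [h, le_max_left]
        refine ⟨M - S, ?_, by linarith⟩
        intro i
        rcases lt_trichotomy (α i) 0 with h | h | h
        · have hne : (α i : ℝ) < 0 := by exact_mod_cast h
          set u : ℝ := -(Qsum (q i) y - (r i:ℝ)) / (α i : ℝ) with hu
          have hterm : M - u ≤ (if α i < 0 then max 0 (M - u) else 0) := by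
            simp [h, le_max_right]
          have hsingle : (if α i < 0 then max 0 (M - u) else 0) ≤ S := by
            rw [hS]
            apply Finset.single_le_sum (f := fun i =>
              (if α i < 0 then max 0 (M - (-(Qsum (q i) y - (r i:ℝ)) / (α i : ℝ))) else 0))
              (fun i _ => by by_cases hh : α i < 0 <;> simp [hh, le_max_left]) (Finset.mem_univ i)
          have hub : M - S ≤ u := by linarith
          have hcancel : u * (α i : ℝ) = -(Qsum (q i) y - (r i:ℝ)) :=
            div_mul_cancel₀ _ (ne_of_lt hne)
          nlinarith [hub, hcancel, hne]
        · have := hzero y hy i h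
          rw [h]
          push_cast
          simp only [zero_mul, zero_add]
          linarith
        · exact absurd h (not_lt.2 (hB i))
      · push_neg at hB
        obtain ⟨ip, hip⟩ := hB
        by_cases hC : ∃ i₀, 0 < α i₀ ∧ ∀ j, α j ≠ 0 → σ.2 i₀ j = true
        · left
          obtain ⟨i₀, hi₀, hcmp⟩ := hC
          refine ⟨fun j => -q i₀ j / α i₀, r i₀ / α i₀, ?_⟩
          intro y hy
          rw [hv y]
          have hα : (0:ℝ) < (α i₀ : ℝ) := by exact_mod_cast hi₀
          set t₀ : ℝ := -(Qsum (q i₀) y - (r i₀:ℝ)) / (α i₀ : ℝ) with ht₀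
          have hcancel : t₀ * (α i₀ : ℝ) = -(Qsum (q i₀) y - (r i₀:ℝ)) :=
            div_mul_cancel₀ _ (ne_of_gt hα)
          have hmemT : t₀ ∈ {t : ℝ | ∀ i, 0 ≤ (α i : ℝ) * t + (Qsum (q i) y - (r i : ℝ))} := by
            intro j
            rcases eq_or_ne (α j) 0 with h | h
            · rw [h]
              push_cast
              simp only [zero_mul, zero_add]
              exact hzero y hy j h
            · have hs := (mem_CellSet.1 hy).2 i₀ j
              rw [mem_C1set, hcmp j h] at hs
              simp only [if_true] at hs
              have he2 := cmp_eval α q r i₀ j y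
              have hc2 : (α j:ℝ) * (t₀ * (α i₀:ℝ)) = (α j:ℝ) * (-(Qsum (q i₀) y - (r i₀:ℝ))) := by
                rw [hcancel]
              have key : 0 ≤ (α i₀:ℝ) * ((α j:ℝ) * t₀ + (Qsum (q j) y - (r j:ℝ))) := by
                nlinarith [hc2, hs, he2]
              nlinarith [key, hα]
          have hlb : ∀ t ∈ {t : ℝ | ∀ i, 0 ≤ (α i : ℝ) * t + (Qsum (q i) y - (r i : ℝ))},
              t₀ ≤ t := by
            intro t ht
            have h1 := ht i₀
            nlinarith [hcancel, hα]
          rw [sInf_image_coe_eq hmemT hlb, EReal.coe_eq_coe_iff]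
          have hstep : ∑ j, ((-q i₀ j / α i₀ : ℚ) : ℝ) * y j
              = (∑ j, -((q i₀ j : ℝ) * y j)) / (α i₀ : ℝ) := by
            rw [Finset.sum_div]
            refine Finset.sum_congr rfl fun j _ => ?_
            push_cast
            rw [div_mul_eq_mul_div, neg_mul]
          rw [hstep, ht₀]
          push_cast
          rw [← add_div]
          congr 1
          rw [Finset.sum_neg_distrib]
          simp only [Qsum]
          ring
        · right; left
          intro y hy
          rw [hv y]
          have hempty : {t : ℝ | ∀ i, 0 ≤ (α i : ℝ) * t + (Qsum (q i) y - (r i : ℝ))} = ∅ := by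
            ext t
            simp only [Set.mem_setOf_eq, Set.mem_empty_iff_false, iff_false]
            intro ht
            have hSne : (Finset.univ.filter (fun i => 0 < α i)).Nonempty :=
              ⟨ip, by simp [hip]⟩
            obtain ⟨i₀, hi₀mem, hi₀max⟩ := Finset.exists_max_image _
              (fun i => -(Qsum (q i) y - (r i:ℝ)) / (α i : ℝ)) hSne
            have hi₀pos : 0 < α i₀ := by simpa using (Finset.mem_filter.1 hi₀mem).2
            have hαr : (0:ℝ) < (α i₀ : ℝ) := by exact_mod_cast hi₀pos
            set t₀ : ℝ := -(Qsum (q i₀) y - (r i₀:ℝ)) / (α i₀ : ℝ) with ht₀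
            have hcancel : t₀ * (α i₀ : ℝ) = -(Qsum (q i₀) y - (r i₀:ℝ)) :=
              div_mul_cancel₀ _ (ne_of_gt hαr)
            push_neg at hC
            obtain ⟨j, hj0, hjfalse⟩ := hC i₀ hi₀pos
            have hjf : σ.2 i₀ j = false := by simpa using hjfalse
            have hs := (mem_CellSet.1 hy).2 i₀ j
            rw [mem_C1set, hjf] at hs
            simp only [if_neg Bool.false_ne_true, Bool.false_eq_true, if_false] at hs
            have he2 := cmp_eval α q r i₀ j y
            have hconj : 0 ≤ (α j : ℝ) * t₀ + (Qsum (q j) y - (r j:ℝ)) := by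
              rcases lt_or_gt_of_ne hj0 with hneg | hpos
              · have hnegr : (α j : ℝ) < 0 := by exact_mod_cast hneg
                have h1 := ht j
                have h2 := ht i₀
                have htge : t₀ ≤ t := by nlinarith [hcancel, hαr]
                nlinarith [h1, htge, hnegr]
              · have hposr : (0:ℝ) < (α j : ℝ) := by exact_mod_cast hpos
                have hjmem : j ∈ Finset.univ.filter (fun i => 0 < α i) :=
                  Finset.mem_filter.2 ⟨Finset.mem_univ j, hpos⟩
                have hle := hi₀max j hjmem
                have hcancelj : (-(Qsum (q j) y - (r j:ℝ)) / (α j : ℝ)) * (α j : ℝ)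
                    = -(Qsum (q j) y - (r j:ℝ)) := div_mul_cancel₀ _ (ne_of_gt hposr)
                nlinarith [hle, hcancelj, hposr]
            have hc2 : (α j:ℝ) * (t₀ * (α i₀:ℝ)) = (α j:ℝ) * (-(Qsum (q i₀) y - (r i₀:ℝ))) := by
              rw [hcancel]
            nlinarith [hc2, hs, he2, mul_nonneg hαr.le hconj]
          rw [hempty]
          simp

/-- the value function v(y) = inf_x { cᵀx : A x + B y ≥ b } of a
rational LP with right-hand-side parameter y is piecewise linear: there is a
finite partition of ℝ^{ny} into rational generalized polyhedra on each of which
v is a rational affine-linear function of y, identically +∞, or identically −∞. -/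
theorem stmt_16 {nx ny m : ℕ}
    (A : Matrix (Fin m) (Fin nx) ℚ) (B : Matrix (Fin m) (Fin ny) ℚ)
    (b : Fin m → ℚ) (c : Fin nx → ℚ)
    (v : (Fin ny → ℝ) → EReal)
    (hv : ∀ y, v y =
      ⨅ x : {x : Fin nx → ℝ // (fun i => (b i : ℝ)) ≤
          (A.map ((↑·) : ℚ → ℝ)).mulVec x + (B.map ((↑·) : ℚ → ℝ)).mulVec y},
        ((∑ j, (c j : ℝ) * (x : Fin nx → ℝ) j : ℝ) : EReal)) :
    ∃ (k : ℕ) (P : Fin k → Set (Fin ny → ℝ)),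
      (∀ l, IsRatGenPolyhedron (P l)) ∧
      Pairwise (Function.onFun Disjoint P) ∧
      (⋃ l, P l) = Set.univ ∧
      ∀ l, (∃ (c' : Fin ny → ℚ) (d : ℚ), ∀ y ∈ P l,
              v y = ((∑ j, (c' j : ℝ) * y j + (d : ℝ) : ℝ) : EReal)) ∨
           (∀ y ∈ P l, v y = ⊤) ∨ (∀ y ∈ P l, v y = ⊥) := by
  classical
  set obj : LinCon nx (ny+1) := (fun j => -c j, Fin.cons 1 (fun _ => 0), 0) with hobj
  set rows : List (LinCon nx (ny+1)) :=
    (List.finRange m).map (fun i => (fun j => A i j, Fin.cons 0 (fun j => B i j), b i)) with hrows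
  obtain ⟨L0, hL0⟩ := fm_main nx (obj :: rows)
  set N := L0.length with hN
  set αf : Fin N → ℚ := fun i => (L0.get i).1 0 with hαf
  set qf : Fin N → Fin ny → ℚ := fun i j => (L0.get i).1 j.succ with hqf
  set rf : Fin N → ℚ := fun i => (L0.get i).2 with hrf
  refine master αf qf rf v ?_
  intro y
  have evalObj : ∀ (x : Fin nx → ℝ) (t : ℝ),
      evalCon obj x (Fin.cons t y) = t - ∑ j, (c j : ℝ) * x j := by
    intro x t
    simp only [hobj, evalCon, Fin.sum_univ_succ, Fin.cons_zero, Fin.cons_succ]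
    push_cast
    simp only [neg_mul, Finset.sum_neg_distrib, mul_zero, zero_mul, Finset.sum_const_zero,
      one_mul]
    ring
  have evalRow : ∀ (i : Fin m) (x : Fin nx → ℝ) (t : ℝ),
      evalCon ((fun j => A i j, Fin.cons 0 (fun j => B i j), b i) : LinCon nx (ny+1))
          x (Fin.cons t y)
        = (∑ j, (A i j : ℝ) * x j) + (∑ j, (B i j : ℝ) * y j) - (b i : ℝ) := by
    intro i x t
    simp only [evalCon, Fin.sum_univ_succ, Fin.cons_zero, Fin.cons_succ]
    push_cast
    ring
  have hmulA : ∀ (x : Fin nx → ℝ) (i : Fin m),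
      (A.map ((↑·) : ℚ → ℝ)).mulVec x i = ∑ j, (A i j : ℝ) * x j := by
    intro x i
    simp [Matrix.mulVec, dotProduct, Matrix.map_apply]
  have hmulB : ∀ (i : Fin m),
      (B.map ((↑·) : ℚ → ℝ)).mulVec y i = ∑ j, (B i j : ℝ) * y j := by
    intro i
    simp [Matrix.mulVec, dotProduct, Matrix.map_apply]
  have hSatIff : ∀ (x : Fin nx → ℝ) (t : ℝ), SatL (obj :: rows) x (Fin.cons t y) ↔
      ((fun i => (b i : ℝ)) ≤
          (A.map ((↑·) : ℚ → ℝ)).mulVec x + (B.map ((↑·) : ℚ → ℝ)).mulVec y ∧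
        (∑ j, (c j : ℝ) * x j) ≤ t) := by
    intro x t
    constructor
    · intro h
      have h0 := h obj List.mem_cons_self
      rw [evalObj] at h0
      refine ⟨?_, by linarith⟩
      intro i
      have hi := h _ (List.mem_cons_of_mem _
        (by rw [hrows]; exact List.mem_map.2 ⟨i, List.mem_finRange i, rfl⟩))
      rw [evalRow] at hi
      show (b i : ℝ) ≤ _
      rw [Pi.add_apply, hmulA, hmulB]
      linarith
    · rintro ⟨hfeas, hobj'⟩ cc hcc
      rcases List.mem_cons.1 hcc with rfl | hcc
      · rw [evalObj]; linarith
      · rw [hrows] at hcc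
        obtain ⟨i, -, rfl⟩ := List.mem_map.1 hcc
        rw [evalRow]
        have hfi := hfeas i
        rw [Pi.add_apply, hmulA, hmulB] at hfi
        linarith
  have hSat0Iff : ∀ t : ℝ, Sat0 L0 (Fin.cons t y) ↔
      ∀ i : Fin N, 0 ≤ (αf i : ℝ) * t + (Qsum (qf i) y - (rf i : ℝ)) := by
    intro t
    constructor
    · intro h i
      have hmemi : L0.get i ∈ L0 := List.get_mem L0 i
      have := h (L0.get i) hmemi
      rw [Fin.sum_univ_succ] at this
      simp only [Fin.cons_zero, Fin.cons_succ] at this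
      simp only [hαf, hqf, hrf, Qsum]
      linarith
    · intro h cc hcc
      obtain ⟨i, rfl⟩ := List.mem_iff_get.1 hcc
      have hi := h i
      rw [Fin.sum_univ_succ]
      simp only [Fin.cons_zero, Fin.cons_succ]
      simp only [hαf, hqf, hrf, Qsum] at hi
      linarith
  rw [hv y]
  refine Eq.trans (inf_eq_sInf_epigraph
    {x : Fin nx → ℝ | (fun i => (b i : ℝ)) ≤
        (A.map ((↑·) : ℚ → ℝ)).mulVec x + (B.map ((↑·) : ℚ → ℝ)).mulVec y}
    (fun x => ∑ j, (c j : ℝ) * x j)) ?_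
  refine congrArg sInf (congrArg _ ?_)
  ext t
  simp only [Set.mem_setOf_eq]
  rw [← hSat0Iff t, ← hL0 (Fin.cons t y)]
  constructor
  · rintro ⟨x, hx1, hx2⟩
    exact ⟨x, (hSatIff x t).2 ⟨hx1, hx2⟩⟩
  · rintro ⟨x, hx⟩
    obtain ⟨h1, h2⟩ := (hSatIff x t).1 hx
    exact ⟨x, h1, h2⟩
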